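/- Let Δ be a modulus of arity k with values in [0,1] on [0,1]^k, and let D_Δ be the lattice generated by the functions u_{a,b}^{x̄,ȳ} with rational parameters x̄, ȳ ∈ (ℚ ∩ [0,1])^k and a, b ∈ ℚ ∩ [0,1] (satisfying a ≤ b < a + Δ(π(ȳ−x̄)) when Δ(π(ȳ−x̄))>0, and constants a when Δ(π(ȳ−x̄))=0). Then D_Δ is countable and every function u : [0,1]^k → [0,1] respecting Δ is a uniform limit of functions from D_Δ. -/

import Mathlib

/-- The box `[0,1]^k`. -/
def unitBox (k : ℕ) : Set (Fin k → ℝ) := {z | ∀ i, z i ∈ Set.Icc (0 : ℝ) 1}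

/-- The lattice (under pointwise min and max) generated by a set of functions. -/
def latticeGen {k : ℕ} (A : Set ((Fin k → ℝ) → ℝ)) : Set ((Fin k → ℝ) → ℝ) :=
  ⋂₀ {S | A ⊆ S ∧ ∀ f ∈ S, ∀ g ∈ S,
      (fun z => min (f z) (g z)) ∈ S ∧ (fun z => max (f z) (g z)) ∈ S}

/-- The generating family of basic piecewise functions (rational parameters). -/
def genSetQ {k : ℕ} (Δ : (Fin k → ℝ) → ℝ) : Set ((Fin k → ℝ) → ℝ) :=
  {u | (∃ x ∈ unitBox k, ∃ y ∈ unitBox k, ∃ a b : ℝ, (∀ i, ∃ p : ℚ, x i = (p : ℝ)) ∧ (∀ i, ∃ p : ℚ, y i = (p : ℝ)) ∧ (∃ p : ℚ, a = (p : ℝ)) ∧ (∃ p : ℚ, b = (p : ℝ)) ∧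
        a ∈ Set.Icc (0 : ℝ) 1 ∧ b ∈ Set.Icc (0 : ℝ) 1 ∧ a ≤ b ∧
        0 < Δ (fun i => |y i - x i|) ∧ b < a + Δ (fun i => |y i - x i|) ∧
        u = fun z => min 1 (a + ((b - a) / Δ (fun i => |y i - x i|)) *
          Δ (fun i => |z i - x i|))) ∨
      (∃ a : ℝ, a ∈ Set.Icc (0 : ℝ) 1 ∧ (∃ p : ℚ, a = (p : ℝ)) ∧ u = fun _ => a)}

inductive LatGen {k : ℕ} (A : Set ((Fin k → ℝ) → ℝ)) : ((Fin k → ℝ) → ℝ) → Prop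
  | base {f} : f ∈ A → LatGen A f
  | min {f g} : LatGen A f → LatGen A g → LatGen A (fun z => min (f z) (g z))
  | max {f g} : LatGen A f → LatGen A g → LatGen A (fun z => max (f z) (g z))

theorem latticeGen_eq {k : ℕ} (A : Set ((Fin k → ℝ) → ℝ)) :
    latticeGen A = {f | LatGen A f} := by
  apply le_antisymm
  · intro f hf
    exact hf {f | LatGen A f} ⟨fun g hg => LatGen.base hg,
      fun f hf g hg => ⟨LatGen.min hf hg, LatGen.max hf hg⟩⟩
  · intro f hf
    intro S hS
    induction hf with
    | base h => exact hS.1 h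
    | min hf hg ihf ihg => exact (hS.2 _ ihf _ ihg).1
    | max hf hg ihf ihg => exact (hS.2 _ ihf _ ihg).2

theorem latticeGen_countable {k : ℕ} {A : Set ((Fin k → ℝ) → ℝ)} (hA : A.Countable) :
    (latticeGen A).Countable := by
  rw [latticeGen_eq]
  let C : ℕ → Set ((Fin k → ℝ) → ℝ) := fun n =>
    Nat.rec A (fun _ S => S ∪ Set.image2 (fun f g => fun z => min (f z) (g z)) S S
      ∪ Set.image2 (fun f g => fun z => max (f z) (g z)) S S) n
  have hCc : ∀ n, (C n).Countable := by
    intro n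
    induction n with
    | zero => exact hA
    | succ n ih => exact (ih.union (ih.image2 ih _)).union (ih.image2 ih _)
  have hmono : ∀ m n, m ≤ n → C m ⊆ C n := by
    intro m n h
    induction h with
    | refl => exact subset_rfl
    | step _ ih => exact ih.trans (Set.subset_union_left.trans Set.subset_union_left)
  have : {f | LatGen A f} ⊆ ⋃ n, C n := by
    intro f hf
    induction hf with
    | @base f h => exact Set.mem_iUnion.2 ⟨0, h⟩
    | @min f g _ _ ihf ihg =>
      obtain ⟨n, hn⟩ := Set.mem_iUnion.1 ihf
      obtain ⟨m, hm⟩ := Set.mem_iUnion.1 ihg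
      exact Set.mem_iUnion.2 ⟨(max n m) + 1, Or.inl <| Or.inr <|
        Set.mem_image2_of_mem (hmono n _ (le_max_left n m) hn)
          (hmono m _ (le_max_right n m) hm)⟩
    | @max f g _ _ ihf ihg =>
      obtain ⟨n, hn⟩ := Set.mem_iUnion.1 ihf
      obtain ⟨m, hm⟩ := Set.mem_iUnion.1 ihg
      exact Set.mem_iUnion.2 ⟨(max n m) + 1, Or.inr <|
        Set.mem_image2_of_mem (hmono n _ (le_max_left n m) hn)
          (hmono m _ (le_max_right n m) hm)⟩
  exact Set.Countable.mono this (Set.countable_iUnion hCc)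

theorem genSetQ_countable {k : ℕ} (Δ : (Fin k → ℝ) → ℝ) : (genSetQ Δ).Countable := by
  let e : ((Fin k → ℚ) × (Fin k → ℚ) × ℚ × ℚ) ⊕ ℚ → ((Fin k → ℝ) → ℝ) := fun d =>
    match d with
    | Sum.inl (x, y, a, b) => fun z =>
        min 1 ((a : ℝ) + (((b : ℝ) - (a : ℝ)) / Δ (fun i => |(y i : ℝ) - (x i : ℝ)|)) *
          Δ (fun i => |z i - (x i : ℝ)|))
    | Sum.inr a => fun _ => (a : ℝ)
  have : genSetQ Δ ⊆ Set.range e := by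
    rintro u (⟨x, hx, y, hy, a, b, hxq, hyq, ⟨pa, rfl⟩, ⟨pb, rfl⟩, _, _, _, _, _, rfl⟩ |
      ⟨a, _, ⟨pa, rfl⟩, rfl⟩)
    · choose qx hqx using hxq
      choose qy hqy using hyq
      refine ⟨Sum.inl (qx, qy, pa, pb), ?_⟩
      have hx' : (fun i => ((qx i : ℝ))) = x := funext fun i => (hqx i).symm
      have hy' : (fun i => ((qy i : ℝ))) = y := funext fun i => (hqy i).symm
      simp only [e]
      funext z
      rw [show (fun i => |(qy i : ℝ) - (qx i : ℝ)|) = fun i => |y i - x i| from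
        funext fun i => by rw [← hqx i, ← hqy i]]
      rw [show (fun i => |z i - (qx i : ℝ)|) = fun i => |z i - x i| from
        funext fun i => by rw [← hqx i]]
    · exact ⟨Sum.inr pa, rfl⟩
  exact Set.Countable.mono this (Set.countable_range e)

theorem ratNear01 {t : ℝ} (ht : t ∈ Set.Icc (0:ℝ) 1) {r : ℝ} (hr : 0 < r) :
    ∃ q : ℚ, 0 ≤ (q : ℝ) ∧ (q : ℝ) ≤ t ∧ t - (q : ℝ) < r := by
  obtain ⟨q, hq1, hq2⟩ := exists_rat_btwn (show t - r < t by linarith)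
  refine ⟨max q 0, ?_, ?_, ?_⟩
  · push_cast; exact le_max_right _ _
  · push_cast; exact max_le hq2.le ht.1
  · push_cast
    have : t - r < (max (q:ℝ) 0) := lt_max_iff.2 (Or.inl hq1)
    linarith

theorem vecNear {k : ℕ} {x : Fin k → ℝ} (hx : x ∈ unitBox k) {r : ℝ} (hr : 0 < r) :
    ∃ q : Fin k → ℚ, (fun i => (q i : ℝ)) ∈ unitBox k ∧ ∀ i, |x i - (q i : ℝ)| < r := by
  have h : ∀ i, ∃ q : ℚ, 0 ≤ (q : ℝ) ∧ (q : ℝ) ≤ x i ∧ x i - (q : ℝ) < r :=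
    fun i => ratNear01 (hx i) hr
  choose q hq0 hq1 hq2 using h
  exact ⟨q, fun i => ⟨hq0 i, (hq1 i).trans (hx i).2⟩,
    fun i => abs_lt.2 ⟨by linarith [hq1 i, hr], by linarith [hq2 i]⟩⟩

theorem delta_small {k : ℕ} (Δ : (Fin k → ℝ) → ℝ)
    (hcont : ContinuousOn Δ {x | ∀ i, 0 ≤ x i}) (h0 : Δ 0 = 0)
    (δ : ℝ) (hδ : 0 < δ) :
    ∃ r > 0, ∀ v : Fin k → ℝ, (∀ i, 0 ≤ v i) → (∀ i, v i < r) → Δ v < δ := by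
  have h00 : (0 : Fin k → ℝ) ∈ {x : Fin k → ℝ | ∀ i, 0 ≤ x i} := fun i => le_refl 0
  have := (hcont 0 h00)
  rw [Metric.continuousWithinAt_iff] at this
  obtain ⟨r, hr, hball⟩ := this δ hδ
  refine ⟨r, hr, fun v hv0 hvr => ?_⟩
  have hd : dist v 0 < r := by
    rcases Nat.eq_zero_or_pos k with hk | hk
    · subst hk
      simpa [dist_pi_def] using hr
    · rw [dist_pi_lt_iff hr]
      intro i
      simpa [Real.dist_eq, abs_of_nonneg (hv0 i)] using hvr i
  have := hball hv0 hd
  rw [h0, Real.dist_eq, sub_zero] at this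
  calc Δ v ≤ |Δ v| := le_abs_self _
  _ < δ := this

theorem sep_lemma {k : ℕ} (Δ : (Fin k → ℝ) → ℝ)
    (hcont : ContinuousOn Δ {x | ∀ i, 0 ≤ x i})
    (hnn : ∀ x : Fin k → ℝ, (∀ i, 0 ≤ x i) → 0 ≤ Δ x)
    (hmono : ∀ x y : Fin k → ℝ, (∀ i, 0 ≤ x i) → (∀ i, x i ≤ y i) → Δ x ≤ Δ y)
    (hsub : ∀ x y : Fin k → ℝ, (∀ i, 0 ≤ x i) → (∀ i, 0 ≤ y i) → Δ (x + y) ≤ Δ x + Δ y)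
    (h0 : Δ 0 = 0)
    (u : (Fin k → ℝ) → ℝ)
    (hu : ∀ z ∈ unitBox k, u z ∈ Set.Icc (0 : ℝ) 1)
    (huresp : ∀ z ∈ unitBox k, ∀ w ∈ unitBox k, |u z - u w| ≤ Δ (fun i => |z i - w i|))
    {x y : Fin k → ℝ} (hx : x ∈ unitBox k) (hy : y ∈ unitBox k) (hxy : u x ≤ u y)
    {ε : ℝ} (hε : 0 < ε) :
    ∃ g ∈ genSetQ Δ, |g x - u x| < ε ∧ |g y - u y| < ε := by
  set D := Δ (fun i => |y i - x i|) with hD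
  have hDnn : 0 ≤ D := hnn _ (fun i => abs_nonneg _)
  have huD : u y - u x ≤ D := (le_abs_self _).trans (huresp y hy x hx)
  rcases eq_or_lt_of_le hDnn with hD0 | hDpos
  · -- degenerate case: constant function
    have huyx : u y = u x := by
      have := huresp y hy x hx
      rw [← hD, ← hD0] at this
      have := abs_nonpos_iff.mp this
      linarith [sub_eq_zero.mp this]
    obtain ⟨q, hq0, hq1, hq2⟩ := ratNear01 (hu x hx) hε
    refine ⟨fun _ => (q : ℝ), Or.inr ⟨(q : ℝ), ⟨hq0, hq1.trans (hu x hx).2⟩, ⟨q, rfl⟩, rfl⟩,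
      ?_, ?_⟩
    · rw [abs_lt]; constructor <;> linarith
    · rw [huyx, abs_lt]; constructor <;> linarith
  · -- main case
    set δ := min (ε / 6) (D / 4) with hδdef
    have hδpos : 0 < δ := lt_min (by linarith) (by linarith)
    have hδε : δ ≤ ε / 6 := min_le_left _ _
    have hδD : δ ≤ D / 4 := min_le_right _ _
    obtain ⟨r, hr, hrs⟩ := delta_small Δ hcont h0 δ hδpos
    obtain ⟨qx, hqxbox, hqxcl⟩ := vecNear hx hr
    obtain ⟨qy, hqybox, hqycl⟩ := vecNear hy hr
    set xb : Fin k → ℝ := fun i => (qx i : ℝ) with hxb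
    set yb : Fin k → ℝ := fun i => (qy i : ℝ) with hyb
    have hdx : Δ (fun i => |x i - xb i|) < δ :=
      hrs _ (fun i => abs_nonneg _) (fun i => hqxcl i)
    have hdy : Δ (fun i => |y i - yb i|) < δ :=
      hrs _ (fun i => abs_nonneg _) (fun i => hqycl i)
    have hdxnn : 0 ≤ Δ (fun i => |x i - xb i|) := hnn _ (fun i => abs_nonneg _)
    have hdynn : 0 ≤ Δ (fun i => |y i - yb i|) := hnn _ (fun i => abs_nonneg _)
    set D' := Δ (fun i => |yb i - xb i|) with hD'
    have hD'nn : 0 ≤ D' := hnn _ (fun i => abs_nonneg _)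
    -- subadditivity comparison helper
    have key : ∀ p q s : Fin k → ℝ, (∀ i, |p i| ≤ |q i| + |s i|) →
        Δ (fun i => |p i|) ≤ Δ (fun i => |q i|) + Δ (fun i => |s i|) := by
      intro p q s h
      have h1 : Δ (fun i => |p i|) ≤ Δ ((fun i => |q i|) + fun i => |s i|) := by
        apply hmono _ _ (fun i => abs_nonneg _)
        intro i
        simpa using h i
      exact h1.trans (hsub _ _ (fun i => abs_nonneg _) (fun i => abs_nonneg _))
    -- (I1) : D ≤ D' + small + small
    have hI1 : D ≤ D' + 2 * δ := by
      have s1 : Δ (fun i => |y i - x i|) ≤ Δ (fun i => |y i - xb i|) +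
          Δ (fun i => |x i - xb i|) := by
        apply key
        intro i
        have : y i - x i = (y i - xb i) + -(x i - xb i) := by ring
        rw [this]
        exact (abs_add_le _ _).trans (by rw [abs_neg])
      have s2 : Δ (fun i => |y i - xb i|) ≤ Δ (fun i => |yb i - xb i|) +
          Δ (fun i => |y i - yb i|) := by
        apply key
        intro i
        have : y i - xb i = (yb i - xb i) + (y i - yb i) := by ring
        rw [this]
        exact abs_add_le _ _
      linarith [s1, s2, hdx, hdy]
    have hD'pos : 0 < D' := by linarith
    -- (I2)/(I3)
    have hI2 : Δ (fun i => |y i - xb i|) ≤ D' + Δ (fun i => |y i - yb i|) := by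
      apply key
      intro i
      have : y i - xb i = (yb i - xb i) + (y i - yb i) := by ring
      rw [this]; exact abs_add_le _ _
    have hI3 : D' ≤ Δ (fun i => |y i - xb i|) + Δ (fun i => |y i - yb i|) := by
      apply key
      intro i
      have : yb i - xb i = (y i - xb i) + -(y i - yb i) := by ring
      rw [this]
      exact (abs_add_le _ _).trans (by rw [abs_neg])
    -- choose a
    obtain ⟨qa, hqa0, hqa1, hqa2⟩ := ratNear01 (hu x hx) (by linarith : (0:ℝ) < ε / 6)
    set a : ℝ := (qa : ℝ) with ha
    have hauy : a ≤ u y := hqa1.trans hxy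
    set M := min (u y) (a + D') with hM
    have hM1 : M ≤ u y := min_le_left _ _
    have hM2 : M ≤ a + D' := min_le_right _ _
    have haM : a ≤ M := le_min hauy (by linarith)
    obtain ⟨qb', hqb'1, hqb'2⟩ := exists_rat_btwn (show M - ε / 6 < M by linarith)
    set qb : ℚ := max qb' qa with hqb
    set b : ℝ := (qb : ℝ) with hb
    have hbmax : b = max (qb' : ℝ) a := by rw [hb, hqb]; push_cast; rfl
    have hab : a ≤ b := by rw [hbmax]; exact le_max_right _ _
    have hbM : b ≤ M := by rw [hbmax]; exact max_le hqb'2.le haM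
    have hbuy : b ≤ u y := hbM.trans hM1
    have hb1 : b ≤ 1 := hbuy.trans (hu y hy).2
    have hbaD : b < a + D' := by
      rw [hbmax]
      exact max_lt (hqb'2.trans_le hM2) (by linarith)
    have huyb : u y - b < 4 * (ε / 6) := by
      have h1 : M - ε / 6 < b := by
        rw [hbmax]
        exact lt_max_iff.2 (Or.inl hqb'1)
      have h2 : u y - M ≤ ε / 6 + 2 * δ := by
        rcases le_total (u y) (a + D') with hc | hc
        · rw [hM, min_eq_left hc]
          linarith
        · rw [hM, min_eq_right hc]
          linarith
      linarith
    set lam := (b - a) / D' with hlam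
    have hlam0 : 0 ≤ lam := div_nonneg (by linarith) hD'nn
    have hlam1 : lam ≤ 1 := by
      rw [hlam, div_le_one hD'pos]
      linarith
    have hlamD : lam * D' = b - a := div_mul_cancel₀ _ (ne_of_gt hD'pos)
    refine ⟨fun z => min 1 (a + lam * Δ (fun i => |z i - xb i|)), ?_, ?_, ?_⟩
    · left
      exact ⟨xb, hqxbox, yb, hqybox, a, b, fun i => ⟨qx i, rfl⟩, fun i => ⟨qy i, rfl⟩,
        ⟨qa, rfl⟩, ⟨qb, rfl⟩, ⟨hqa0, hqa1.trans (hu x hx).2⟩,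
        ⟨hqa0.trans hab, hb1⟩, hab, hD'pos, hbaD, rfl⟩
    · -- estimate at x
      have ha1 : a ≤ 1 := hqa1.trans (hu x hx).2
      have hp1 : 0 ≤ lam * Δ (fun i => |x i - xb i|) := mul_nonneg hlam0 hdxnn
      have hp2 : lam * Δ (fun i => |x i - xb i|) ≤ Δ (fun i => |x i - xb i|) := by
        calc lam * Δ (fun i => |x i - xb i|) ≤ 1 * Δ (fun i => |x i - xb i|) :=
              mul_le_mul_of_nonneg_right hlam1 hdxnn
        _ = Δ (fun i => |x i - xb i|) := one_mul _
      have hgl : a ≤ min 1 (a + lam * Δ (fun i => |x i - xb i|)) :=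
        le_min ha1 (by linarith)
      have hgu : min 1 (a + lam * Δ (fun i => |x i - xb i|)) ≤ a + δ :=
        (min_le_right _ _).trans (by linarith)
      rw [abs_lt]
      refine ⟨by linarith, by linarith [(hu x hx).1]⟩
    · -- estimate at y
      have hp3 : lam * Δ (fun i => |y i - yb i|) ≤ Δ (fun i => |y i - yb i|) := by
        calc lam * Δ (fun i => |y i - yb i|) ≤ 1 * Δ (fun i => |y i - yb i|) :=
              mul_le_mul_of_nonneg_right hlam1 hdynn
        _ = _ := one_mul _
      have hp4 : lam * Δ (fun i => |y i - yb i|) ≥ 0 := mul_nonneg hlam0 hdynn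
      have hup : lam * Δ (fun i => |y i - xb i|) ≤
          lam * (D' + Δ (fun i => |y i - yb i|)) :=
        mul_le_mul_of_nonneg_left hI2 hlam0
      have hupe : lam * (D' + Δ (fun i => |y i - yb i|)) =
          (b - a) + lam * Δ (fun i => |y i - yb i|) := by rw [mul_add, hlamD]
      have hlo : lam * (D' - Δ (fun i => |y i - yb i|)) ≤
          lam * Δ (fun i => |y i - xb i|) :=
        mul_le_mul_of_nonneg_left (by linarith) hlam0
      have hloe : lam * (D' - Δ (fun i => |y i - yb i|)) =
          (b - a) - lam * Δ (fun i => |y i - yb i|) := by rw [mul_sub, hlamD]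
      have h1 : a + lam * Δ (fun i => |y i - xb i|) ≤ b + δ := by linarith
      have h2 : b - δ ≤ a + lam * Δ (fun i => |y i - xb i|) := by linarith
      have hgl : b - δ ≤ min 1 (a + lam * Δ (fun i => |y i - xb i|)) :=
        le_min (by linarith) h2
      have hgu : min 1 (a + lam * Δ (fun i => |y i - xb i|)) ≤ b + δ :=
        (min_le_right _ _).trans h1
      rw [abs_lt]
      refine ⟨by linarith, by linarith⟩
theorem genSetQ_continuous {k : ℕ} (Δ : (Fin k → ℝ) → ℝ)
    (hcont : ContinuousOn Δ {x | ∀ i, 0 ≤ x i}) :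
    ∀ g ∈ genSetQ Δ, Continuous g := by
  rintro g (⟨x, _, y, _, a, b, _, _, _, _, _, _, _, _, _, rfl⟩ | ⟨a, _, _, rfl⟩)
  · have hm : Continuous (fun z : Fin k → ℝ => fun i => |z i - x i|) :=
      continuous_pi fun i => ((continuous_apply i).sub continuous_const).abs
    have hc : Continuous (fun z : Fin k → ℝ => Δ (fun i => |z i - x i|)) :=
      hcont.comp_continuous hm (fun z i => abs_nonneg _)
    exact continuous_const.min (continuous_const.add (continuous_const.mul hc))
  · exact continuous_const

theorem uContOn {k : ℕ} (Δ : (Fin k → ℝ) → ℝ)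
    (hcont : ContinuousOn Δ {x | ∀ i, 0 ≤ x i}) (h0 : Δ 0 = 0)
    (u : (Fin k → ℝ) → ℝ)
    (huresp : ∀ z ∈ unitBox k, ∀ w ∈ unitBox k, |u z - u w| ≤ Δ (fun i => |z i - w i|)) :
    ContinuousOn u (unitBox k) := by
  intro z hz
  rw [Metric.continuousWithinAt_iff]
  intro ε hε
  obtain ⟨r, hr, hrs⟩ := delta_small Δ hcont h0 ε hε
  refine ⟨r, hr, fun w hw hd => ?_⟩
  have : ∀ i, |w i - z i| < r := by
    intro i
    calc |w i - z i| = dist (w i) (z i) := (Real.dist_eq _ _).symm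
    _ ≤ dist w z := dist_le_pi_dist w z i
    _ < r := hd
  calc dist (u w) (u z) = |u w - u z| := Real.dist_eq _ _
  _ ≤ Δ (fun i => |w i - z i|) := huresp w hw z hz
  _ < ε := hrs _ (fun i => abs_nonneg _) this

theorem approx_lemma {k : ℕ} (Δ : (Fin k → ℝ) → ℝ)
    (hcont : ContinuousOn Δ {x | ∀ i, 0 ≤ x i})
    (hnn : ∀ x : Fin k → ℝ, (∀ i, 0 ≤ x i) → 0 ≤ Δ x)
    (hmono : ∀ x y : Fin k → ℝ, (∀ i, 0 ≤ x i) → (∀ i, x i ≤ y i) → Δ x ≤ Δ y)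
    (hsub : ∀ x y : Fin k → ℝ, (∀ i, 0 ≤ x i) → (∀ i, 0 ≤ y i) → Δ (x + y) ≤ Δ x + Δ y)
    (h0 : Δ 0 = 0)
    (u : (Fin k → ℝ) → ℝ)
    (hu : ∀ z ∈ unitBox k, u z ∈ Set.Icc (0 : ℝ) 1)
    (huresp : ∀ z ∈ unitBox k, ∀ w ∈ unitBox k, |u z - u w| ≤ Δ (fun i => |z i - w i|))
    {ε : ℝ} (hε : 0 < ε) :
    ∃ g, LatGen (genSetQ Δ) g ∧ ∀ z ∈ unitBox k, |g z - u z| < ε := by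
  classical
  have hcomp : IsCompact (unitBox k) := by
    have : unitBox k = Set.pi Set.univ (fun _ : Fin k => Set.Icc (0:ℝ) 1) := by
      ext z
      simp only [unitBox, Set.mem_setOf_eq, Set.mem_pi, Set.mem_univ, forall_const]
    rw [this]; exact isCompact_univ_pi (fun _ => isCompact_Icc)
  haveI : CompactSpace (unitBox k) := isCompact_iff_compactSpace.mp hcomp
  haveI hne : Nonempty (unitBox k) := ⟨⟨fun _ => 0, fun i => ⟨le_refl 0, zero_le_one⟩⟩⟩
  set S : Set ((Fin k → ℝ) → ℝ) := {g | LatGen (genSetQ Δ) g ∧ Continuous g} with hS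
  have sup_closed : ∀ f ∈ S, ∀ g ∈ S, f ⊔ g ∈ S := by
    intro f hf g hg
    have he : f ⊔ g = fun z => max (f z) (g z) := funext fun z => by
      simp [Pi.sup_apply]
    constructor
    · rw [he]; exact LatGen.max hf.1 hg.1
    · rw [he]; exact hf.2.max hg.2
  have inf_closed : ∀ f ∈ S, ∀ g ∈ S, f ⊓ g ∈ S := by
    intro f hf g hg
    have he : f ⊓ g = fun z => min (f z) (g z) := funext fun z => by
      simp [Pi.inf_apply]
    constructor
    · rw [he]; exact LatGen.min hf.1 hg.1
    · rw [he]; exact hf.2.min hg.2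
  have ucont : Continuous (fun p : unitBox k => u ↑p) :=
    (uContOn Δ hcont h0 u huresp).restrict
  -- two-point approximation
  have sep' : ∀ p q : unitBox k, ∃ g ∈ S, |g ↑p - u ↑p| < ε ∧ |g ↑q - u ↑q| < ε := by
    intro p q
    rcases le_total (u ↑p) (u ↑q) with h | h
    · obtain ⟨g, hg, h1, h2⟩ := sep_lemma Δ hcont hnn hmono hsub h0 u hu huresp
        p.2 q.2 h hε
      exact ⟨g, ⟨LatGen.base hg, genSetQ_continuous Δ hcont g hg⟩, h1, h2⟩
    · obtain ⟨g, hg, h1, h2⟩ := sep_lemma Δ hcont hnn hmono hsub h0 u hu huresp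
        q.2 p.2 h hε
      exact ⟨g, ⟨LatGen.base hg, genSetQ_continuous Δ hcont g hg⟩, h2, h1⟩
  choose gfun hgS hgp hgq using sep'
  let U : unitBox k → unitBox k → Set (unitBox k) :=
    fun p q => {z | u ↑z - ε < gfun p q ↑z}
  have U_nhd : ∀ p q, U p q ∈ nhds q := by
    intro p q
    refine IsOpen.mem_nhds ?_ ?_
    · exact isOpen_lt (ucont.sub continuous_const)
        ((hgS p q).2.comp continuous_subtype_val)
    · have := hgq p q
      rw [abs_lt] at this
      simpa [U] using by linarith [this.1]
  let ys : unitBox k → Finset (unitBox k) := fun p =>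
    (CompactSpace.elim_nhds_subcover (U p) (U_nhd p)).choose
  have ys_w : ∀ p, ⋃ q ∈ ys p, U p q = ⊤ := fun p =>
    (CompactSpace.elim_nhds_subcover (U p) (U_nhd p)).choose_spec
  have ys_ne : ∀ p, (ys p).Nonempty := fun p =>
    Set.nonempty_of_union_eq_top_of_nonempty _ _ hne (ys_w p)
  let h : unitBox k → ((Fin k → ℝ) → ℝ) := fun p =>
    (ys p).sup' (ys_ne p) (fun q => gfun p q)
  have hhS : ∀ p, h p ∈ S := fun p =>
    Finset.sup'_mem S sup_closed _ _ _ (fun q _ => hgS p q)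
  have lt_h : ∀ p (z : unitBox k), u ↑z - ε < h p ↑z := by
    intro p z
    obtain ⟨q, hq, hzq⟩ := Set.exists_set_mem_of_union_eq_top _ _ (ys_w p) z
    have : h p ↑z = (ys p).sup' (ys_ne p) (fun q => gfun p q ↑z) := by
      simp [h, Finset.sup'_apply]
    rw [this, Finset.lt_sup'_iff]
    exact ⟨q, hq, hzq⟩
  have h_lt : ∀ p, h p ↑p < u ↑p + ε := by
    intro p
    have : h p ↑p = (ys p).sup' (ys_ne p) (fun q => gfun p q ↑p) := by
      simp [h, Finset.sup'_apply]
    rw [this, Finset.sup'_lt_iff]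
    intro q _
    have := hgp p q
    rw [abs_lt] at this
    linarith [this.2]
  let W : unitBox k → Set (unitBox k) := fun p => {z | h p ↑z < u ↑z + ε}
  have W_nhd : ∀ p, W p ∈ nhds p := by
    intro p
    refine IsOpen.mem_nhds ?_ ?_
    · exact isOpen_lt ((hhS p).2.comp continuous_subtype_val)
        (ucont.add continuous_const)
    · simpa [W] using h_lt p
  obtain ⟨xs, xs_w⟩ := CompactSpace.elim_nhds_subcover W W_nhd
  have xs_ne : xs.Nonempty := Set.nonempty_of_union_eq_top_of_nonempty _ _ hne xs_w
  let final : (Fin k → ℝ) → ℝ := xs.inf' xs_ne (fun p => h p)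
  have hfS : final ∈ S := Finset.inf'_mem S inf_closed _ _ _ (fun p _ => hhS p)
  refine ⟨final, hfS.1, fun z hz => ?_⟩
  set zz : unitBox k := ⟨z, hz⟩ with hzz
  have happ : final z = xs.inf' xs_ne (fun p => h p z) := by
    simp [final, Finset.inf'_apply]
  rw [abs_lt]
  constructor
  · -- final z - u z > -ε  i.e. final z > u z - ε
    have : u z - ε < final z := by
      rw [happ, Finset.lt_inf'_iff]
      intro p _
      exact lt_h p zz
    linarith
  · obtain ⟨p, hp, hzp⟩ := Set.exists_set_mem_of_union_eq_top _ _ xs_w zz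
    have h1 : final z ≤ h p z := by
      rw [happ]
      exact Finset.inf'_le _ hp
    have h2 : h p z < u z + ε := hzp
    linarith

theorem stmt_12 {k : ℕ} (Δ : (Fin k → ℝ) → ℝ)
    (hcont : ContinuousOn Δ {x | ∀ i, 0 ≤ x i})
    (hnn : ∀ x : Fin k → ℝ, (∀ i, 0 ≤ x i) → 0 ≤ Δ x)
    (hmono : ∀ x y : Fin k → ℝ, (∀ i, 0 ≤ x i) → (∀ i, x i ≤ y i) → Δ x ≤ Δ y)
    (hsub : ∀ x y : Fin k → ℝ, (∀ i, 0 ≤ x i) → (∀ i, 0 ≤ y i) → Δ (x + y) ≤ Δ x + Δ y)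
    (h0 : Δ 0 = 0)
    (hΔ1 : ∀ x ∈ unitBox k, Δ x ≤ 1)
    (u : (Fin k → ℝ) → ℝ)
    (hu : ∀ z ∈ unitBox k, u z ∈ Set.Icc (0 : ℝ) 1)
    (huresp : ∀ z ∈ unitBox k, ∀ w ∈ unitBox k, |u z - u w| ≤ Δ (fun i => |z i - w i|)) :
    (latticeGen (genSetQ Δ)).Countable ∧
    ∃ F : ℕ → ((Fin k → ℝ) → ℝ), (∀ m, F m ∈ latticeGen (genSetQ Δ)) ∧
      TendstoUniformlyOn F u Filter.atTop (unitBox k) := by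
  constructor
  · exact latticeGen_countable (genSetQ_countable Δ)
  · have happ : ∀ m : ℕ, ∃ g, LatGen (genSetQ Δ) g ∧
        ∀ z ∈ unitBox k, |g z - u z| < 1 / (m + 1) := by
      intro m
      exact approx_lemma Δ hcont hnn hmono hsub h0 u hu huresp (by positivity)
    choose F hF1 hF2 using happ
    refine ⟨F, fun m => ?_, ?_⟩
    · rw [latticeGen_eq]; exact hF1 m
    · rw [Metric.tendstoUniformlyOn_iff]
      intro ε hε
      obtain ⟨N, hN⟩ := exists_nat_one_div_lt hε
      rw [Filter.eventually_atTop]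
      refine ⟨N, fun n hn z hz => ?_⟩
      rw [Real.dist_eq, abs_sub_comm]
      have h1 : |F n z - u z| < 1 / (n + 1) := hF2 n z hz
      have h2 : (1 : ℝ) / (n + 1) ≤ 1 / (N + 1) := by
        apply one_div_le_one_div_of_le
        · positivity
        · have : (N : ℝ) ≤ (n : ℝ) := Nat.cast_le.mpr hn
          linarith
      linarith
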